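/- arXiv:1201.4892 — 2 statements merged into one kernel-verified Lean document; each statement's English description precedes it below -/
import Mathlib

section
/- Let B1 and B2 be proper unital C*-subalgebras of M_N, let B be a unital C*-subalgebra of B1, and assume Z(B1,B2;[B]) is nonempty. Then the map u ↦ uB2u* ∩ B1, from Z(B1,B2;[B]) to the set of unital C*-subalgebras of B1 equipped with the Hausdorff metric d_H, is continuous: for every u0 ∈ Z(B1,B2;[B]) and every ε > 0 there is δ > 0 such that every u ∈ Z(B1,B2;[B]) with ‖u − u0‖ < δ satisfies d_H(uB2u* ∩ B1, u0B2u0* ∩ B1) < ε. -/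
open scoped Matrix.Norms.L2Operator

set_option synthInstance.maxHeartbeats 1000000
set_option maxHeartbeats 1000000

noncomputable section

abbrev MatN (N : ℕ) := Matrix (Fin N) (Fin N) ℂ

/-- The perturbation `u S u*` of a set of matrices by a unitary. -/
def conjSet {N : ℕ} (u : MatN N) (S : Set (MatN N)) : Set (MatN N) :=
  (fun x => u * x * star u) '' S

/-- `Z(B1,B2;[B]) = { u ∈ U(M_N) : u B2 u* ∩ B1 ∼_{B1} B }`, where `∼_{B1}` is conjugacy by a
unitary of `B1`. -/
def Zset {N : ℕ} (B1 B2 B : StarSubalgebra ℂ (MatN N)) : Set (MatN N) :=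
  {u | u ∈ unitary (MatN N) ∧ ∃ v : MatN N, v ∈ unitary (MatN N) ∧ v ∈ B1 ∧
    conjSet v (B : Set (MatN N)) = conjSet u (B2 : Set (MatN N)) ∩ (B1 : Set (MatN N))}

/-- The Hausdorff distance between the closed unit balls of two sets of matrices. -/
def dH {N : ℕ} (C1 C2 : Set (MatN N)) : ℝ :=
  Metric.hausdorffDist (C1 ∩ Metric.closedBall (0 : MatN N) 1)
    (C2 ∩ Metric.closedBall (0 : MatN N) 1)

open Filter Topology Metric Module Submodule

/-- Conjugation by `u` as a linear map. -/
def conjL {N : ℕ} (u : MatN N) : MatN N →ₗ[ℂ] MatN N where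
  toFun x := u * x * star u
  map_add' x y := by simp [add_mul, mul_add]
  map_smul' c x := by simp [smul_mul_assoc, mul_smul_comm]

lemma conjL_apply {N : ℕ} (u x : MatN N) : conjL u x = u * x * star u := rfl

lemma conj_cancel {M : Type*} [Ring M] [StarRing M] {w : M} (h1 : star w * w = 1)
    (a : M) : star w * (w * a * star w) * w = a := by
  have : star w * (w * a * star w) * w = (star w * w) * a * (star w * w) := by noncomm_ring
  rw [this, h1, one_mul, mul_one]

lemma conj_cancel' {M : Type*} [Ring M] [StarRing M] {w : M} (h2 : w * star w = 1)
    (a : M) : w * (star w * a * w) * star w = a := by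
  have : w * (star w * a * w) * star w = (w * star w) * a * (w * star w) := by noncomm_ring
  rw [this, h2, one_mul, mul_one]

/-- Conjugation by a unitary as a linear equivalence. -/
def conjLE {N : ℕ} (u : MatN N) (hu : u ∈ unitary (MatN N)) : MatN N ≃ₗ[ℂ] MatN N :=
  LinearEquiv.ofLinear (conjL u) (conjL (star u))
    (by
      apply LinearMap.ext; intro x
      simp only [LinearMap.coe_comp, Function.comp_apply, conjL_apply, LinearMap.id_apply,
        star_star]
      exact conj_cancel' ((Unitary.mem_iff.mp hu).2) x)
    (by
      apply LinearMap.ext; intro x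
      simp only [LinearMap.coe_comp, Function.comp_apply, conjL_apply, LinearMap.id_apply,
        star_star]
      exact conj_cancel ((Unitary.mem_iff.mp hu).1) x)

lemma conjLE_coe {N : ℕ} (u : MatN N) (hu : u ∈ unitary (MatN N)) :
    (conjLE u hu : MatN N →ₗ[ℂ] MatN N) = conjL u := rfl

/-- The submodule underlying a star subalgebra. -/
def sm {N : ℕ} (B : StarSubalgebra ℂ (MatN N)) : Submodule ℂ (MatN N) :=
  Subalgebra.toSubmodule B.toSubalgebra

lemma sm_coe {N : ℕ} (B : StarSubalgebra ℂ (MatN N)) : (sm B : Set (MatN N)) = B := rfl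

/-- `u B2 u* ∩ B1` as a submodule. -/
def Ssub {N : ℕ} (B1 B2 : StarSubalgebra ℂ (MatN N)) (u : MatN N) : Submodule ℂ (MatN N) :=
  ((sm B2).map (conjL u)) ⊓ (sm B1)

lemma Ssub_coe {N : ℕ} (B1 B2 : StarSubalgebra ℂ (MatN N)) (u : MatN N) :
    (Ssub B1 B2 u : Set (MatN N)) = conjSet u (B2 : Set (MatN N)) ∩ (B1 : Set (MatN N)) := by
  have : conjSet u (B2 : Set (MatN N)) = (conjL u) '' (sm B2 : Set (MatN N)) := rfl
  rw [Ssub, Submodule.coe_inf, this, Submodule.map_coe, sm_coe]; rfl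

lemma finrank_Ssub {N : ℕ} (B1 B2 B : StarSubalgebra ℂ (MatN N)) {u : MatN N}
    (hu : u ∈ Zset B1 B2 B) : finrank ℂ (Ssub B1 B2 u) = finrank ℂ (sm B) := by
  obtain ⟨huu, v, hv, hvB1, heq⟩ := hu
  have hset : (Ssub B1 B2 u : Set (MatN N)) = ((sm B).map (conjL v) : Set (MatN N)) := by
    rw [Ssub_coe, ← heq, Submodule.map_coe, sm_coe]; rfl
  have : Ssub B1 B2 u = (sm B).map (conjL v) := SetLike.coe_injective hset
  rw [this, ← conjLE_coe v hv]
  exact LinearEquiv.finrank_map_eq (conjLE v hv) (sm B)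

lemma limit_mem {N : ℕ} (B1 B2 : StarSubalgebra ℂ (MatN N)) (w : ℕ → MatN N) (u0 : MatN N)
    (hw : ∀ n, w n ∈ unitary (MatN N)) (hu0 : u0 ∈ unitary (MatN N))
    (hconv : Tendsto w atTop (𝓝 u0)) (x : ℕ → MatN N)
    (hx : ∀ n, x n ∈ Ssub B1 B2 (w n)) (x0 : MatN N) (hx0 : Tendsto x atTop (𝓝 x0)) :
    x0 ∈ Ssub B1 B2 u0 := by
  have hB1closed : IsClosed ((sm B1 : Submodule ℂ (MatN N)) : Set (MatN N)) :=
    Submodule.closed_of_finiteDimensional _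
  have hB2closed : IsClosed ((sm B2 : Submodule ℂ (MatN N)) : Set (MatN N)) :=
    Submodule.closed_of_finiteDimensional _
  constructor
  · -- x0 ∈ (sm B2).map (conjL u0)
    set b : ℕ → MatN N := fun n => star (w n) * x n * w n with hb
    have hbmem : ∀ n, b n ∈ sm B2 := by
      intro n
      obtain ⟨y, hy, hyx⟩ := (hx n).1
      have h1 : star (w n) * w n = 1 := (Unitary.mem_iff.mp (hw n)).1
      have : b n = y := by
        rw [hb]; simp only [← hyx, conjL_apply]; exact conj_cancel h1 y
      rw [this]; exact hy
    have hbconv : Tendsto b atTop (𝓝 (star u0 * x0 * u0)) := by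
      exact ((hconv.star.mul hx0).mul hconv)
    have hbmem0 : star u0 * x0 * u0 ∈ sm B2 :=
      hB2closed.mem_of_tendsto hbconv (Filter.Eventually.of_forall hbmem)
    refine ⟨star u0 * x0 * u0, hbmem0, ?_⟩
    rw [conjL_apply]
    exact conj_cancel' ((Unitary.mem_iff.mp hu0).2) x0
  · -- x0 ∈ sm B1
    exact hB1closed.mem_of_tendsto hx0 (Filter.Eventually.of_forall fun n => (hx n).2)

/-- Expansion of an element of the span of an orthonormal family. -/
lemma onb_expansion {F : Type*} [NormedAddCommGroup F] [InnerProductSpace ℂ F]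
    {ι : Type*} [Fintype ι] {G : ι → F} (hG : Orthonormal ℂ G) {y : F}
    (hy : y ∈ Submodule.span ℂ (Set.range G)) :
    y = ∑ i, (inner ℂ (G i) y : ℂ) • G i := by
  obtain ⟨a, rfl⟩ := Submodule.mem_span_range_iff_exists_fun ℂ |>.mp hy
  congr 1
  funext i
  rw [hG.inner_right_fintype]

lemma norm_le_one_of_mem_ball {N : ℕ} {x : MatN N} (h : x ∈ Metric.closedBall (0 : MatN N) 1) :
    ‖x‖ ≤ 1 := by
  rwa [Metric.mem_closedBall, dist_zero_right] at h


lemma claim1 {N : ℕ} (B1 B2 : StarSubalgebra ℂ (MatN N)) (u : ℕ → MatN N)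
    (u0 : MatN N) (hu : ∀ n, u n ∈ unitary (MatN N)) (hu0 : u0 ∈ unitary (MatN N))
    (hconv : Tendsto u atTop (𝓝 u0)) (ε : ℝ) (hε : 0 < ε) :
    ∀ᶠ n in atTop, ∀ x ∈ (Ssub B1 B2 (u n) : Set (MatN N)) ∩ Metric.closedBall 0 1,
      ∃ y ∈ (Ssub B1 B2 u0 : Set (MatN N)) ∩ Metric.closedBall 0 1, dist x y ≤ ε := by
  by_contra h
  have hfreq : ∃ᶠ n in atTop, ∃ x ∈ (Ssub B1 B2 (u n) : Set (MatN N)) ∩ Metric.closedBall 0 1,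
      ∀ y ∈ (Ssub B1 B2 u0 : Set (MatN N)) ∩ Metric.closedBall 0 1, ε < dist x y := by
    have := Filter.not_eventually.mp h
    apply this.mono
    intro n hn
    push_neg at hn
    exact hn
  obtain ⟨φ, hφ, hP⟩ := Filter.extraction_of_frequently_atTop hfreq
  choose x hx1 hx2 using hP
  haveI : ProperSpace (MatN N) := FiniteDimensional.proper ℂ _
  obtain ⟨x0, hx0mem, ψ, hψ, hxconv⟩ :=
    (isCompact_closedBall (0 : MatN N) 1).tendsto_subseq (fun j => (hx1 j).2)
  have hx0S : x0 ∈ Ssub B1 B2 u0 := by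
    refine limit_mem B1 B2 (fun j => u (φ (ψ j))) u0 (fun j => hu _) hu0
      (hconv.comp (hφ.comp hψ).tendsto_atTop) (fun j => x (ψ j))
      (fun j => (hx1 (ψ j)).1) x0 hxconv
  have hdist : Tendsto (fun j => dist (x (ψ j)) x0) atTop (𝓝 0) :=
    tendsto_iff_dist_tendsto_zero.mp hxconv
  obtain ⟨j, hj⟩ := (hdist.eventually_lt_const hε).exists
  exact absurd hj (not_lt.mpr (le_of_lt (hx2 (ψ j) x0 ⟨hx0S, hx0mem⟩)))


lemma exists_orthonormal_of_finrank {F : Type*} [NormedAddCommGroup F] [InnerProductSpace ℂ F]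
    (W : Submodule ℂ F) [FiniteDimensional ℂ W] (k : ℕ) (h : finrank ℂ W = k) :
    ∃ G : Fin k → F, Orthonormal ℂ G ∧ ∀ i, G i ∈ W := by
  have b := stdOrthonormalBasis ℂ W
  have h1 : Orthonormal ℂ (fun i : Fin (finrank ℂ W) => (b i : F)) := by
    rw [orthonormal_iff_ite]
    intro i j
    rw [← Submodule.coe_inner]
    exact orthonormal_iff_ite.mp b.orthonormal i j
  exact ⟨fun i => (b (Fin.cast h.symm i) : F),
    h1.comp (Fin.cast h.symm) (Fin.cast_injective h.symm), fun i => SetLike.coe_mem _⟩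

lemma claim2 {N : ℕ} (B1 B2 : StarSubalgebra ℂ (MatN N)) (k : ℕ) (u : ℕ → MatN N)
    (u0 : MatN N) (hu : ∀ n, u n ∈ unitary (MatN N)) (hu0 : u0 ∈ unitary (MatN N))
    (hconv : Tendsto u atTop (𝓝 u0))
    (hrk : ∀ n, finrank ℂ (Ssub B1 B2 (u n)) = k)
    (hrk0 : finrank ℂ (Ssub B1 B2 u0) = k)
    (ε : ℝ) (hε : 0 < ε) :
    ∀ᶠ n in atTop, ∀ x ∈ (Ssub B1 B2 u0 : Set (MatN N)) ∩ Metric.closedBall 0 1,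
      ∃ y ∈ (Ssub B1 B2 (u n) : Set (MatN N)) ∩ Metric.closedBall 0 1, dist x y ≤ ε := by
  by_contra h
  have hfreq : ∃ᶠ n in atTop, ∃ x ∈ (Ssub B1 B2 u0 : Set (MatN N)) ∩ Metric.closedBall 0 1,
      ∀ y ∈ (Ssub B1 B2 (u n) : Set (MatN N)) ∩ Metric.closedBall 0 1, ε < dist x y := by
    have := Filter.not_eventually.mp h
    apply this.mono
    intro n hn
    push_neg at hn
    exact hn
  obtain ⟨φ, hφ, hP⟩ := Filter.extraction_of_frequently_atTop hfreq
  choose x hx1 hx2 using hP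
  -- Euclidean model
  set d := finrank ℂ (MatN N) with hd
  obtain ⟨φE⟩ : Nonempty (MatN N ≃L[ℂ] EuclideanSpace ℂ (Fin d)) :=
    ⟨ContinuousLinearEquiv.ofFinrankEq (by rw [finrank_euclideanSpace_fin])⟩
  set T : ℕ → Submodule ℂ (EuclideanSpace ℂ (Fin d)) := fun j =>
    (Ssub B1 B2 (u (φ j))).map (φE.toLinearEquiv : MatN N →ₗ[ℂ] EuclideanSpace ℂ (Fin d))
    with hT
  set T0 : Submodule ℂ (EuclideanSpace ℂ (Fin d)) :=
    (Ssub B1 B2 u0).map (φE.toLinearEquiv : MatN N →ₗ[ℂ] EuclideanSpace ℂ (Fin d)) with hT0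
  have hTrk : ∀ j, finrank ℂ (T j) = k := fun j =>
    (LinearEquiv.finrank_map_eq φE.toLinearEquiv (Ssub B1 B2 (u (φ j)))).trans (hrk (φ j))
  have hT0rk : finrank ℂ T0 = k :=
    (LinearEquiv.finrank_map_eq φE.toLinearEquiv (Ssub B1 B2 u0)).trans hrk0
  -- orthonormal bases
  have hex : ∀ j, ∃ G : Fin k → EuclideanSpace ℂ (Fin d),
      Orthonormal ℂ G ∧ ∀ i, G i ∈ T j := fun j =>
    exists_orthonormal_of_finrank (T j) k (hTrk j)
  choose G hON hGmem using hex
  have hG1 : ∀ j i, ‖G j i‖ = 1 := fun j i => (hON j).1 i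
  -- compactness
  haveI : ProperSpace (Fin k → EuclideanSpace ℂ (Fin d)) := FiniteDimensional.proper ℂ _
  have hGball : ∀ j, G j ∈ Metric.closedBall (0 : Fin k → EuclideanSpace ℂ (Fin d)) 1 := by
    intro j
    rw [Metric.mem_closedBall, dist_zero_right]
    exact (pi_norm_le_iff_of_nonneg zero_le_one).mpr fun i => le_of_eq (hG1 j i)
  obtain ⟨G0, hG0mem, ψ, hψ, hGconv⟩ :=
    (isCompact_closedBall (0 : Fin k → EuclideanSpace ℂ (Fin d)) 1).tendsto_subseq hGball
  have hGi : ∀ i, Tendsto (fun j => G (ψ j) i) atTop (𝓝 (G0 i)) := fun i =>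
    tendsto_pi_nhds.mp hGconv i
  have hON0 : Orthonormal ℂ G0 := by
    rw [orthonormal_iff_ite]
    intro i i'
    have ht : Tendsto (fun j => (inner ℂ (G (ψ j) i) (G (ψ j) i') : ℂ)) atTop
        (𝓝 (inner ℂ (G0 i) (G0 i'))) := (hGi i).inner (hGi i')
    have hconst : (fun j => (inner ℂ (G (ψ j) i) (G (ψ j) i') : ℂ)) =
        fun _ => if i = i' then (1 : ℂ) else 0 := by
      funext j
      exact orthonormal_iff_ite.mp (hON (ψ j)) i i'
    rw [hconst] at ht
    exact tendsto_nhds_unique ht tendsto_const_nhds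
  -- the limit vectors lie in T0
  have hG0T : ∀ i, G0 i ∈ T0 := by
    intro i
    have hmem : ∀ j, φE.symm (G (ψ j) i) ∈ Ssub B1 B2 (u (φ (ψ j))) := by
      intro j
      obtain ⟨y, hyS, hyz⟩ := hGmem (ψ j) i
      have hy : φE.symm (G (ψ j) i) = y := by
        rw [← hyz]; simp
      rw [hy]; exact hyS
    have htend : Tendsto (fun j => φE.symm (G (ψ j) i)) atTop (𝓝 (φE.symm (G0 i))) :=
      (φE.symm.continuous.tendsto _).comp (hGi i)
    have hlim := limit_mem B1 B2 (fun j => u (φ (ψ j))) u0 (fun j => hu _) hu0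
      (hconv.comp ((hφ.comp hψ).tendsto_atTop)) _ hmem _ htend
    exact ⟨φE.symm (G0 i), hlim, by simp⟩
  have hspan : Submodule.span ℂ (Set.range G0) = T0 := by
    apply Submodule.eq_of_le_of_finrank_le
    · rw [Submodule.span_le]
      rintro _ ⟨i, rfl⟩
      exact hG0T i
    · rw [hT0rk, finrank_span_eq_card hON0.linearIndependent, Fintype.card_fin]
  -- constants
  set M := ‖(φE : MatN N →L[ℂ] EuclideanSpace ℂ (Fin d))‖ with hM
  set Cs := ‖(φE.symm : EuclideanSpace ℂ (Fin d) →L[ℂ] MatN N)‖ with hCs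
  have hM0 : 0 ≤ M := by rw [hM]; exact ContinuousLinearMap.opNorm_nonneg _
  have hCs0 : 0 ≤ Cs := by rw [hCs]; exact ContinuousLinearMap.opNorm_nonneg _
  -- the approximating elements
  let c : ℕ → Fin k → ℂ := fun j i => inner ℂ (G0 i) (φE (x (ψ j)))
  let z : ℕ → EuclideanSpace ℂ (Fin d) := fun j => ∑ i, c j i • G (ψ j) i
  let p : ℕ → MatN N := fun j => φE.symm (z j)
  let m : ℕ → ℝ := fun j => max ‖p j‖ 1
  let q : ℕ → MatN N := fun j => (((m j)⁻¹ : ℝ) : ℂ) • p j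
  have hxS : ∀ j, x (ψ j) ∈ Ssub B1 B2 u0 := fun j => (hx1 (ψ j)).1
  have hxball : ∀ j, ‖x (ψ j)‖ ≤ 1 := fun j => norm_le_one_of_mem_ball (hx1 (ψ j)).2
  have hφxT0 : ∀ j, φE (x (ψ j)) ∈ T0 := fun j => ⟨x (ψ j), hxS j, by simp⟩
  have hexp : ∀ j, φE (x (ψ j)) = ∑ i, c j i • G0 i := by
    intro j
    exact onb_expansion hON0 (hspan ▸ hφxT0 j)
  have hzT : ∀ j, z j ∈ T (ψ j) := fun j =>
    Submodule.sum_mem _ fun i _ => Submodule.smul_mem _ _ (hGmem (ψ j) i)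
  have hpS : ∀ j, p j ∈ Ssub B1 B2 (u (φ (ψ j))) := by
    intro j
    obtain ⟨y, hyS, hyz⟩ := hzT j
    have hy : p j = y := by
      show φE.symm (z j) = y
      rw [← hyz]; simp
    rw [hy]; exact hyS
  have hqS : ∀ j, q j ∈ Ssub B1 B2 (u (φ (ψ j))) := fun j =>
    Submodule.smul_mem _ _ (hpS j)
  have hm1 : ∀ j, 1 ≤ m j := fun j => le_max_right _ _
  have hm0 : ∀ j, 0 < m j := fun j => lt_of_lt_of_le one_pos (hm1 j)
  have hpm : ∀ j, ‖p j‖ ≤ m j := fun j => le_max_left _ _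
  have hqnorm : ∀ j, ‖q j‖ ≤ 1 := by
    intro j
    have : ‖q j‖ = (m j)⁻¹ * ‖p j‖ := by
      show ‖(((m j)⁻¹ : ℝ) : ℂ) • p j‖ = (m j)⁻¹ * ‖p j‖
      rw [norm_smul, Complex.norm_real, Real.norm_eq_abs, abs_of_pos (inv_pos.mpr (hm0 j))]
    rw [this]
    calc (m j)⁻¹ * ‖p j‖ ≤ (m j)⁻¹ * m j :=
          mul_le_mul_of_nonneg_left (hpm j) (le_of_lt (inv_pos.mpr (hm0 j)))
      _ = 1 := inv_mul_cancel₀ (ne_of_gt (hm0 j))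
  have hpq : ∀ j, ‖p j - q j‖ ≤ ‖p j - x (ψ j)‖ := by
    intro j
    have hpqe : p j - q j = ((1 - (m j)⁻¹ : ℝ) : ℂ) • p j := by
      show p j - (((m j)⁻¹ : ℝ) : ℂ) • p j = ((1 - (m j)⁻¹ : ℝ) : ℂ) • p j
      push_cast
      rw [sub_smul, one_smul]
    have hinv1 : (m j)⁻¹ ≤ 1 := by
      rw [inv_le_one_iff₀]
      right; exact hm1 j
    have hnorm : ‖p j - q j‖ = (1 - (m j)⁻¹) * ‖p j‖ := by
      rw [hpqe, norm_smul, Complex.norm_real, Real.norm_eq_abs, abs_of_nonneg (by linarith)]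
    rw [hnorm]
    rcases le_or_gt ‖p j‖ 1 with hc | hc
    · have : m j = 1 := max_eq_right hc
      rw [this]
      simp [norm_nonneg]
    · have hmpj : m j = ‖p j‖ := max_eq_left (le_of_lt hc)
      have hppos : (0 : ℝ) < ‖p j‖ := lt_trans one_pos hc
      have : (1 - (m j)⁻¹) * ‖p j‖ = ‖p j‖ - 1 := by
        rw [hmpj, sub_mul, one_mul, inv_mul_cancel₀ (ne_of_gt hppos)]
      rw [this]
      calc ‖p j‖ - 1 ≤ ‖p j‖ - ‖x (ψ j)‖ := by linarith [hxball j]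
        _ ≤ ‖p j - x (ψ j)‖ := norm_sub_norm_le _ _
  -- the distance bound
  have hcb : ∀ j i, ‖c j i‖ ≤ M := by
    intro j i
    calc ‖c j i‖ ≤ ‖G0 i‖ * ‖φE (x (ψ j))‖ := norm_inner_le_norm _ _
      _ = ‖φE (x (ψ j))‖ := by rw [hON0.1 i, one_mul]
      _ ≤ M * ‖x (ψ j)‖ := (φE : MatN N →L[ℂ] EuclideanSpace ℂ (Fin d)).le_opNorm _
      _ ≤ M * 1 := mul_le_mul_of_nonneg_left (hxball j) hM0
      _ = M := mul_one M
  have hdiff : ∀ j, ‖φE (x (ψ j)) - z j‖ ≤ M * ∑ i, ‖G (ψ j) i - G0 i‖ := by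
    intro j
    have he : φE (x (ψ j)) - z j = ∑ i, c j i • (G0 i - G (ψ j) i) := by
      rw [hexp j]
      show (∑ i, c j i • G0 i) - (∑ i, c j i • G (ψ j) i) = _
      rw [← Finset.sum_sub_distrib]
      congr 1
      funext i
      rw [smul_sub]
    rw [he]
    calc ‖∑ i, c j i • (G0 i - G (ψ j) i)‖ ≤ ∑ i, ‖c j i • (G0 i - G (ψ j) i)‖ :=
          norm_sum_le _ _
      _ = ∑ i, ‖c j i‖ * ‖G0 i - G (ψ j) i‖ := by
          congr 1; funext i; rw [norm_smul]
      _ ≤ ∑ i, M * ‖G (ψ j) i - G0 i‖ := by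
          apply Finset.sum_le_sum
          intro i _
          rw [norm_sub_rev]
          exact mul_le_mul_of_nonneg_right (hcb j i) (norm_nonneg _)
      _ = M * ∑ i, ‖G (ψ j) i - G0 i‖ := by rw [Finset.mul_sum]
  have hxp : ∀ j, ‖x (ψ j) - p j‖ ≤ Cs * (M * ∑ i, ‖G (ψ j) i - G0 i‖) := by
    intro j
    have he : x (ψ j) - p j = φE.symm (φE (x (ψ j)) - z j) := by
      rw [map_sub]
      show x (ψ j) - φE.symm (z j) = φE.symm (φE (x (ψ j))) - φE.symm (z j)
      rw [φE.symm_apply_apply]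
    rw [he]
    calc ‖φE.symm (φE (x (ψ j)) - z j)‖
        ≤ Cs * ‖φE (x (ψ j)) - z j‖ :=
          (φE.symm : EuclideanSpace ℂ (Fin d) →L[ℂ] MatN N).le_opNorm _
      _ ≤ Cs * (M * ∑ i, ‖G (ψ j) i - G0 i‖) :=
          mul_le_mul_of_nonneg_left (hdiff j) hCs0
  have hbound : ∀ j, dist (x (ψ j)) (q j) ≤ 2 * Cs * M * ∑ i, ‖G (ψ j) i - G0 i‖ := by
    intro j
    calc dist (x (ψ j)) (q j) = ‖x (ψ j) - q j‖ := dist_eq_norm _ _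
      _ ≤ ‖x (ψ j) - p j‖ + ‖p j - q j‖ := by
          have : x (ψ j) - q j = (x (ψ j) - p j) + (p j - q j) := by abel
          rw [this]; exact norm_add_le _ _
      _ ≤ ‖x (ψ j) - p j‖ + ‖p j - x (ψ j)‖ := by linarith [hpq j]
      _ = 2 * ‖x (ψ j) - p j‖ := by rw [norm_sub_rev (p j)]; ring
      _ ≤ 2 * (Cs * (M * ∑ i, ‖G (ψ j) i - G0 i‖)) := by linarith [hxp j]
      _ = 2 * Cs * M * ∑ i, ‖G (ψ j) i - G0 i‖ := by ring
  -- convergence to zero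
  have hR : Tendsto (fun j => ∑ i, ‖G (ψ j) i - G0 i‖) atTop (𝓝 0) := by
    have hterm : ∀ i : Fin k, Tendsto (fun j => ‖G (ψ j) i - G0 i‖) atTop (𝓝 0) := by
      intro i
      have h1 : Tendsto (fun j => G (ψ j) i - G0 i) atTop (𝓝 (G0 i - G0 i)) :=
        (hGi i).sub tendsto_const_nhds
      rw [sub_self] at h1
      simpa using h1.norm
    have hsum := tendsto_finset_sum (Finset.univ : Finset (Fin k)) fun i _ => hterm i
    simpa using hsum
  have hRc : Tendsto (fun j => 2 * Cs * M * ∑ i, ‖G (ψ j) i - G0 i‖) atTop (𝓝 0) := by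
    have := hR.const_mul (2 * Cs * M)
    rwa [mul_zero] at this
  obtain ⟨j, hj⟩ := (hRc.eventually_lt_const hε).exists
  have hqball : q j ∈ Metric.closedBall (0 : MatN N) 1 := by
    rw [Metric.mem_closedBall, dist_zero_right]
    exact hqnorm j
  have hbad := hx2 (ψ j) (q j) ⟨hqS j, hqball⟩
  linarith [hbound j]

/-- The key convergence lemma. -/
lemma key_lemma {N : ℕ} (B1 B2 : StarSubalgebra ℂ (MatN N)) (k : ℕ) (u : ℕ → MatN N)
    (u0 : MatN N) (hu : ∀ n, u n ∈ unitary (MatN N)) (hu0 : u0 ∈ unitary (MatN N))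
    (hconv : Tendsto u atTop (𝓝 u0))
    (hrk : ∀ n, finrank ℂ (Ssub B1 B2 (u n)) = k)
    (hrk0 : finrank ℂ (Ssub B1 B2 u0) = k)
    (ε : ℝ) (hε : 0 < ε) :
    ∃ n, dH ((Ssub B1 B2 (u n) : Set (MatN N))) ((Ssub B1 B2 u0 : Set (MatN N))) < ε := by
  have h1 := claim1 B1 B2 u u0 hu hu0 hconv (ε / 2) (by linarith)
  have h2 := claim2 B1 B2 k u u0 hu hu0 hconv hrk hrk0 (ε / 2) (by linarith)
  obtain ⟨n, hn1, hn2⟩ := (h1.and h2).exists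
  refine ⟨n, ?_⟩
  have hle := Metric.hausdorffDist_le_of_mem_dist (by linarith : (0:ℝ) ≤ ε / 2) hn1 hn2
  unfold dH
  exact lt_of_le_of_lt hle (by linarith)

/-- The map `u ↦ u B2 u* ∩ B1` is continuous from `Z(B1,B2;[B])` to the unital
C*-subalgebras of `B1` with the Hausdorff metric. -/
theorem continuity_of_intersection (N : ℕ) (hN : 0 < N)
    (B1 B2 : StarSubalgebra ℂ (MatN N)) (hB1 : B1 ≠ ⊤) (hB2 : B2 ≠ ⊤)
    (B : StarSubalgebra ℂ (MatN N)) (hB : B ≤ B1)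
    (hZ : (Zset B1 B2 B).Nonempty) :
    ∀ u0 ∈ Zset B1 B2 B, ∀ ε > (0 : ℝ), ∃ δ > (0 : ℝ), ∀ u ∈ Zset B1 B2 B,
      ‖u - u0‖ < δ →
        dH (conjSet u (B2 : Set (MatN N)) ∩ (B1 : Set (MatN N)))
           (conjSet u0 (B2 : Set (MatN N)) ∩ (B1 : Set (MatN N))) < ε := by
  intro u0 hu0 ε hε
  by_contra hcon
  push_neg at hcon
  have hchoice : ∀ n : ℕ, ∃ u, u ∈ Zset B1 B2 B ∧ ‖u - u0‖ < 1 / (n + 1) ∧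
      ε ≤ dH (conjSet u (B2 : Set (MatN N)) ∩ (B1 : Set (MatN N)))
           (conjSet u0 (B2 : Set (MatN N)) ∩ (B1 : Set (MatN N))) := by
    intro n
    obtain ⟨u, hu1, hu2, hu3⟩ := hcon (1 / (n + 1)) (by positivity)
    exact ⟨u, hu1, hu2, hu3⟩
  choose u huZ hunorm hubad using hchoice
  have huconv : Tendsto u atTop (𝓝 u0) := by
    rw [tendsto_iff_norm_sub_tendsto_zero]
    apply squeeze_zero (fun n => norm_nonneg _) (fun n => le_of_lt (hunorm n))
    exact tendsto_one_div_add_atTop_nhds_zero_nat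
  obtain ⟨n, hn⟩ := key_lemma B1 B2 (finrank ℂ (sm B)) u u0 (fun n => (huZ n).1) hu0.1
    huconv (fun n => finrank_Ssub B1 B2 B (huZ n)) (finrank_Ssub B1 B2 B hu0) ε hε
  rw [Ssub_coe, Ssub_coe] at hn
  exact absurd hn (not_lt.mpr (hubad n))
end
end

section
/- Let B1 be a unital C*-subalgebra of M_N and B a unital C*-subalgebra of B1. Let Stab(B1,B) = { u ∈ U(B1) : uBu* = B } and let G be the subgroup of Stab(B1,B) generated by the unitary group of B and the unitary group of B1 ∩ B'. Then G is a normal subgroup of Stab(B1,B) of finite index; moreover, if B is *-isomorphic to ⊕_{i=1}^{I} ⊕_{j=1}^{J_i} M_{n_i} with n_1 < n_2 < ⋯ < n_I, then the index of G in Stab(B1,B) is at most J_1!·J_2!⋯J_I!. -/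
set_option synthInstance.maxHeartbeats 1000000
set_option maxHeartbeats 1000000

noncomputable section

/-- `Stab(B1,B)`: the unitaries of `B1` that normalize `B` under conjugation. -/
def Stab {N : ℕ} (B1 B : StarSubalgebra ℂ (MatN N)) : Set (MatN N) :=
  {u | u ∈ unitary (MatN N) ∧ u ∈ B1 ∧
    (fun x => u * x * star u) '' (B : Set (MatN N)) = (B : Set (MatN N))}

/-- The subgroup of `Stab(B1,B)` generated by `U(B)` and `U(B1 ∩ B')`; since these two
unitary groups commute elementwise, it consists exactly of the products `v * w` with
`v ∈ U(B)` and `w ∈ U(B1 ∩ B')`. -/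
def Gsub {N : ℕ} (B1 B : StarSubalgebra ℂ (MatN N)) : Set (MatN N) :=
  {g | ∃ v w : MatN N, v ∈ unitary (MatN N) ∧ v ∈ B ∧
    w ∈ unitary (MatN N) ∧ w ∈ B1 ∧ (∀ b ∈ B, w * b = b * w) ∧ g = v * w}

section StabLemmas

variable {N : ℕ} {B1 B : StarSubalgebra ℂ (MatN N)} {u u' b : MatN N}

lemma stab_su (hu : u ∈ Stab B1 B) : star u * u = 1 := (Unitary.mem_iff.mp hu.1).1
lemma stab_us (hu : u ∈ Stab B1 B) : u * star u = 1 := (Unitary.mem_iff.mp hu.1).2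

lemma stab_conj_mem (hu : u ∈ Stab B1 B) (hb : b ∈ B) : u * b * star u ∈ B := by
  have h := hu.2.2
  rw [show (b ∈ B) ↔ b ∈ (B : Set (MatN N)) from Iff.rfl] at hb
  rw [show (u * b * star u ∈ B) ↔ u * b * star u ∈ (B : Set (MatN N)) from Iff.rfl, ← h]
  exact ⟨b, hb, rfl⟩

lemma stab_conj_mem' (hu : u ∈ Stab B1 B) (hb : b ∈ B) : star u * b * u ∈ B := by
  have h := hu.2.2
  have hb' : b ∈ (fun x => u * x * star u) '' (B : Set (MatN N)) := by rw [h]; exact hb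
  obtain ⟨c, hc, hcb⟩ := hb'
  have : star u * b * u = c := by
    rw [← hcb]
    simp only [← mul_assoc]
    rw [stab_su hu, one_mul, mul_assoc, stab_su hu, mul_one]
  rw [this]; exact hc

lemma stab_one : (1 : MatN N) ∈ Stab B1 B := by
  refine ⟨one_mem (unitary (MatN N)), B1.one_mem, ?_⟩
  have : (fun x : MatN N => 1 * x * star 1) = id := by
    funext x; simp
  rw [this, Set.image_id]

lemma stab_star (hu : u ∈ Stab B1 B) : star u ∈ Stab B1 B := by
  refine ⟨Unitary.star_mem hu.1, star_mem hu.2.1, ?_⟩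
  rw [star_star]
  ext b
  constructor
  · rintro ⟨c, hc, rfl⟩
    exact stab_conj_mem' hu hc
  · intro hbB
    refine ⟨u * b * star u, stab_conj_mem hu hbB, ?_⟩
    show star u * (u * b * star u) * u = b
    simp only [← mul_assoc]
    rw [stab_su hu, one_mul, mul_assoc, stab_su hu, mul_one]

lemma stab_mul (hu : u ∈ Stab B1 B) (hu' : u' ∈ Stab B1 B) : u * u' ∈ Stab B1 B := by
  refine ⟨mul_mem hu.1 hu'.1, mul_mem hu.2.1 hu'.2.1, ?_⟩
  ext b
  constructor
  · rintro ⟨c, hc, rfl⟩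
    show u * u' * c * star (u * u') ∈ (B : Set (MatN N))
    have : u * u' * c * star (u * u') = u * (u' * c * star u') * star u := by
      rw [star_mul]; simp only [← mul_assoc]
    rw [this]
    exact stab_conj_mem hu (stab_conj_mem hu' hc)
  · intro hbB
    refine ⟨star u' * (star u * b * u) * u', stab_conj_mem' hu' (stab_conj_mem' hu hbB), ?_⟩
    show u * u' * (star u' * (star u * b * u) * u') * star (u * u') = b
    simp only [star_mul, ← mul_assoc]
    rw [mul_assoc u u' (star u'), stab_us hu', mul_one, stab_us hu, one_mul,
      mul_assoc (b * u) u' (star u'), stab_us hu', mul_one, mul_assoc b u (star u),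
      stab_us hu, mul_one]

end StabLemmas
section PiHelpers

variable {I : ℕ} {n J : Fin I → ℕ}

abbrev CAlg (I : ℕ) (n J : Fin I → ℕ) :=
  (i : Fin I) → Fin (J i) → Matrix (Fin (n i)) (Fin (n i)) ℂ

/-- element supported in block (i,j) -/
def sE (i : Fin I) (j : Fin (J i)) (m : Matrix (Fin (n i)) (Fin (n i)) ℂ) : CAlg I n J :=
  Pi.single i (Pi.single j m)

/-- the central projection of block (i,j) -/
def cE (n : Fin I → ℕ) (i : Fin I) (j : Fin (J i)) : CAlg I n J := sE i j 1

lemma star_pi_single {ι : Type*} [DecidableEq ι] {M : ι → Type*} [∀ i, AddMonoid (M i)]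
    [∀ i, StarAddMonoid (M i)] (i : ι) (x : M i) :
    star (Pi.single i x) = Pi.single i (star x) := by
  funext a
  rcases eq_or_ne a i with rfl | h
  · simp
  · simp [Pi.single_eq_of_ne h]

lemma sE_apply_same (i : Fin I) (j : Fin (J i)) (m : Matrix (Fin (n i)) (Fin (n i)) ℂ) :
    sE (J := J) i j m i j = m := by
  simp [sE]

lemma sE_mul (i : Fin I) (j : Fin (J i)) (m m' : Matrix (Fin (n i)) (Fin (n i)) ℂ) :
    sE (J := J) i j m * sE i j m' = sE i j (m * m') := by
  simp only [sE, ← Pi.single_mul]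

lemma sE_add (i : Fin I) (j : Fin (J i)) (m m' : Matrix (Fin (n i)) (Fin (n i)) ℂ) :
    sE (J := J) i j m + sE i j m' = sE i j (m + m') := by
  simp only [sE, ← Pi.single_add]

lemma sE_smul (i : Fin I) (j : Fin (J i)) (c : ℂ) (m : Matrix (Fin (n i)) (Fin (n i)) ℂ) :
    c • sE (J := J) i j m = sE i j (c • m) := by
  simp only [sE, ← Pi.single_smul]

lemma sE_star (i : Fin I) (j : Fin (J i)) (m : Matrix (Fin (n i)) (Fin (n i)) ℂ) :
    star (sE (J := J) i j m) = sE i j (star m) := by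
  simp only [sE, star_pi_single]

lemma sE_zero (i : Fin I) (j : Fin (J i)) : sE (n := n) (J := J) i j 0 = 0 := by
  simp [sE]

lemma cE_comm (i : Fin I) (j : Fin (J i)) (x : CAlg I n J) :
    cE n i j * x = x * cE n i j := by
  funext a
  simp only [cE, sE, Pi.mul_apply]
  rcases eq_or_ne a i with rfl | h
  · rw [Pi.single_eq_same]
    funext b
    simp only [Pi.mul_apply]
    rcases eq_or_ne b j with rfl | hb
    · rw [Pi.single_eq_same, one_mul, mul_one]
    · rw [Pi.single_eq_of_ne hb, zero_mul, mul_zero]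
  · rw [Pi.single_eq_of_ne h, zero_mul, mul_zero]

lemma corner_eq (i : Fin I) (j : Fin (J i)) (x : CAlg I n J) :
    cE n i j * x * cE n i j = sE i j (x i j) := by
  funext a
  simp only [cE, sE, Pi.mul_apply]
  rcases eq_or_ne a i with rfl | h
  · rw [Pi.single_eq_same, Pi.single_eq_same]
    funext b
    simp only [Pi.mul_apply]
    rcases eq_or_ne b j with rfl | hb
    · rw [Pi.single_eq_same, Pi.single_eq_same, one_mul, mul_one]
    · rw [Pi.single_eq_of_ne hb, Pi.single_eq_of_ne hb, zero_mul, mul_zero]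
  · rw [Pi.single_eq_of_ne h, Pi.single_eq_of_ne h, zero_mul, mul_zero]

lemma pi_decomp (x : CAlg I n J) : x = ∑ i, ∑ j, sE i j (x i j) := by
  have h1 : ∀ i : Fin I, ∑ j, sE (n := n) (J := J) i j (x i j) = Pi.single i (x i) := by
    intro i
    calc ∑ j, sE (n := n) (J := J) i j (x i j)
        = ∑ j, (AddMonoidHom.single
            (fun k => Fin (J k) → Matrix (Fin (n k)) (Fin (n k)) ℂ) i) (Pi.single j (x i j)) := rfl
      _ = (AddMonoidHom.single _ i) (∑ j, Pi.single j (x i j)) := (map_sum _ _ _).symm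
      _ = Pi.single i (x i) := by rw [Finset.univ_sum_single]; rfl
  rw [Finset.sum_congr rfl (fun i _ => h1 i), Finset.univ_sum_single]

lemma cE_sum : ∑ i, ∑ j, cE n i j = (1 : CAlg I n J) := by
  calc ∑ i, ∑ j, cE n i j
      = ∑ i, ∑ j, sE (n := n) (J := J) i j ((1 : CAlg I n J) i j) := rfl
    _ = 1 := (pi_decomp 1).symm

lemma cE_orth {i i' : Fin I} {j : Fin (J i)} {j' : Fin (J i')}
    (h : (⟨i, j⟩ : (k : Fin I) × Fin (J k)) ≠ ⟨i', j'⟩) :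
    cE n i j * cE n i' j' = 0 := by
  funext a
  simp only [cE, sE, Pi.mul_apply]
  rcases eq_or_ne a i with rfl | ha
  · rcases eq_or_ne a i' with heq | ha'
    · subst heq
      have hj : j ≠ j' := fun hh => h (by rw [hh])
      rw [Pi.single_eq_same, Pi.single_eq_same]
      funext b
      simp only [Pi.mul_apply]
      rcases eq_or_ne b j with rfl | hb
      · simp [Pi.single_eq_of_ne hj]
      · simp [Pi.single_eq_of_ne hb]
    · simp [Pi.single_eq_of_ne ha']
  · simp [Pi.single_eq_of_ne ha]

end PiHelpers

section PhiSection

variable {N : ℕ} {B1 B : StarSubalgebra ℂ (MatN N)} {I : ℕ} {n J : Fin I → ℕ}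
variable {u u' : MatN N}

open Classical in
/-- conjugation by `u`, transported to `CAlg` through `e` -/
def Phi (e : ↥B ≃⋆ₐ[ℂ] CAlg I n J) (u : MatN N) (x : CAlg I n J) : CAlg I n J :=
  if h : u * ((e.symm x : ↥B) : MatN N) * star u ∈ B then e ⟨_, h⟩ else 1

lemma phi_spec (e : ↥B ≃⋆ₐ[ℂ] CAlg I n J) (hu : u ∈ Stab B1 B) (x : CAlg I n J) :
    ((e.symm (Phi e u x) : ↥B) : MatN N) = u * ((e.symm x : ↥B) : MatN N) * star u := by
  have h : u * ((e.symm x : ↥B) : MatN N) * star u ∈ B := stab_conj_mem hu (e.symm x).2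
  classical
  rw [Phi, dif_pos h, StarAlgEquiv.symm_apply_apply]

lemma mB_mul (e : ↥B ≃⋆ₐ[ℂ] CAlg I n J) (x y : CAlg I n J) :
    ((e.symm (x * y) : ↥B) : MatN N) = (e.symm x : ↥B) * (e.symm y : ↥B) := by
  rw [map_mul]; rfl

lemma mB_add (e : ↥B ≃⋆ₐ[ℂ] CAlg I n J) (x y : CAlg I n J) :
    ((e.symm (x + y) : ↥B) : MatN N) = (e.symm x : ↥B) + (e.symm y : ↥B) := by
  rw [map_add]; rfl

lemma mB_smul (e : ↥B ≃⋆ₐ[ℂ] CAlg I n J) (c : ℂ) (x : CAlg I n J) :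
    ((e.symm (c • x) : ↥B) : MatN N) = c • ((e.symm x : ↥B) : MatN N) := by
  rw [map_smul]; rfl

lemma mB_star (e : ↥B ≃⋆ₐ[ℂ] CAlg I n J) (x : CAlg I n J) :
    ((e.symm (star x) : ↥B) : MatN N) = star ((e.symm x : ↥B) : MatN N) := by
  rw [map_star]; rfl

lemma mB_one (e : ↥B ≃⋆ₐ[ℂ] CAlg I n J) :
    ((e.symm (1 : CAlg I n J) : ↥B) : MatN N) = 1 := by
  rw [map_one]; rfl

lemma phi_eq (e : ↥B ≃⋆ₐ[ℂ] CAlg I n J) (hu : u ∈ Stab B1 B) {x y : CAlg I n J}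
    (h : ((e.symm y : ↥B) : MatN N) = u * ((e.symm x : ↥B) : MatN N) * star u) :
    Phi e u x = y := by
  have h2 := phi_spec e hu x
  have h3 : (e.symm (Phi e u x) : ↥B) = e.symm y := Subtype.ext (h2.trans h.symm)
  exact e.symm.injective h3

lemma phi_mul (e : ↥B ≃⋆ₐ[ℂ] CAlg I n J) (hu : u ∈ Stab B1 B) (x y : CAlg I n J) :
    Phi e u (x * y) = Phi e u x * Phi e u y := by
  apply phi_eq e hu
  rw [mB_mul, phi_spec e hu x, phi_spec e hu y, mB_mul]
  simp only [← mul_assoc]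
  rw [mul_assoc (u * (e.symm x : ↥B)) (star u) u, stab_su hu, mul_one]

lemma phi_add (e : ↥B ≃⋆ₐ[ℂ] CAlg I n J) (hu : u ∈ Stab B1 B) (x y : CAlg I n J) :
    Phi e u (x + y) = Phi e u x + Phi e u y := by
  apply phi_eq e hu
  rw [mB_add, phi_spec e hu x, phi_spec e hu y, mB_add, mul_add, add_mul]

lemma phi_smul (e : ↥B ≃⋆ₐ[ℂ] CAlg I n J) (hu : u ∈ Stab B1 B) (c : ℂ) (x : CAlg I n J) :
    Phi e u (c • x) = c • Phi e u x := by
  apply phi_eq e hu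
  rw [mB_smul, phi_spec e hu x, mB_smul, mul_smul_comm, smul_mul_assoc]

lemma phi_star (e : ↥B ≃⋆ₐ[ℂ] CAlg I n J) (hu : u ∈ Stab B1 B) (x : CAlg I n J) :
    Phi e u (star x) = star (Phi e u x) := by
  apply phi_eq e hu
  rw [mB_star, phi_spec e hu x, mB_star, star_mul, star_mul, star_star, mul_assoc]

lemma phi_one (e : ↥B ≃⋆ₐ[ℂ] CAlg I n J) (hu : u ∈ Stab B1 B) :
    Phi e u (1 : CAlg I n J) = 1 := by
  apply phi_eq e hu
  rw [mB_one, mul_one, stab_us hu]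

lemma phi_comp (e : ↥B ≃⋆ₐ[ℂ] CAlg I n J) (hu : u ∈ Stab B1 B) (hu' : u' ∈ Stab B1 B)
    (x : CAlg I n J) : Phi e (u * u') x = Phi e u (Phi e u' x) := by
  apply phi_eq e (stab_mul hu hu')
  rw [phi_spec e hu, phi_spec e hu', star_mul]
  simp only [← mul_assoc]

lemma phi_id (e : ↥B ≃⋆ₐ[ℂ] CAlg I n J) (x : CAlg I n J) :
    Phi e (1 : MatN N) x = x := by
  apply phi_eq e (stab_one (B1 := B))
  rw [star_one, one_mul, mul_one]

lemma phi_inv (e : ↥B ≃⋆ₐ[ℂ] CAlg I n J) (hu : u ∈ Stab B1 B) (x : CAlg I n J) :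
    Phi e (star u) (Phi e u x) = x := by
  rw [← phi_comp e (stab_star hu) hu, stab_su hu, phi_id]

lemma phi_inv' (e : ↥B ≃⋆ₐ[ℂ] CAlg I n J) (hu : u ∈ Stab B1 B) (x : CAlg I n J) :
    Phi e u (Phi e (star u) x) = x := by
  rw [← phi_comp e hu (stab_star hu), stab_us hu, phi_id]

lemma phi_inj (e : ↥B ≃⋆ₐ[ℂ] CAlg I n J) (hu : u ∈ Stab B1 B) :
    Function.Injective (Phi e u) := by
  intro x y h
  have := congrArg (Phi e (star u)) h
  rwa [phi_inv e hu, phi_inv e hu] at this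

lemma phi_sum (e : ↥B ≃⋆ₐ[ℂ] CAlg I n J) (hu : u ∈ Stab B1 B) {α : Type*} (s : Finset α)
    (g : α → CAlg I n J) : Phi e u (∑ a ∈ s, g a) = ∑ a ∈ s, Phi e u (g a) :=
  map_sum (AddMonoidHom.mk' (Phi e u) (fun a b => phi_add e hu a b)) g s

lemma phi_comm (e : ↥B ≃⋆ₐ[ℂ] CAlg I n J) (hu : u ∈ Stab B1 B) {z : CAlg I n J}
    (hz : ∀ y, z * y = y * z) (x : CAlg I n J) :
    Phi e u z * x = x * Phi e u z := by
  conv_lhs => rw [← phi_inv' e hu x]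
  conv_rhs => rw [← phi_inv' e hu x]
  rw [← phi_mul e hu, ← phi_mul e hu, hz]

end PhiSection


open Matrix in
theorem sn_aux {n : ℕ} (hn : 0 < n) (f : Matrix (Fin n) (Fin n) ℂ → Matrix (Fin n) (Fin n) ℂ)
    (hadd : ∀ a b, f (a + b) = f a + f b) (hsmul : ∀ (c : ℂ) a, f (c • a) = c • f a)
    (hmul : ∀ a b, f (a * b) = f a * f b) (hstar : ∀ a, f (star a) = star (f a))
    (hinj : Function.Injective f) :
    ∃ u : Matrix (Fin n) (Fin n) ℂ, star u * u = 1 ∧ u * star u = 1 ∧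
      ∀ a, f a = u * a * star u := by
  have hf0 : f 0 = 0 := by
    have := hadd 0 0
    simp only [add_zero] at this
    exact (left_eq_add.mp this)
  have hEstar : ∀ k l : Fin n, star (single k l (1:ℂ)) = single l k 1 := by
    intro k l
    ext a b
    simp only [Matrix.star_apply, single, of_apply, and_comm]
    split_ifs <;> simp
  have hEmul : ∀ k l l' m : Fin n, single k l (1:ℂ) * single l' m 1 =
      if l = l' then single k m 1 else 0 := by
    intro k l l' m
    split_ifs with h
    · subst h; simpa using single_mul_single_same (1:ℂ) k l m 1
    · exact single_mul_single_of_ne (1:ℂ) k l l' h 1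
  have i0 : Fin n := ⟨0, hn⟩
  set p := f (single i0 i0 1) with hp
  have hpp : p * p = p := by rw [hp, ← hmul, hEmul]; simp
  have hpne : p ≠ 0 := by
    intro h
    have h2 : single i0 i0 (1:ℂ) = 0 := hinj (by rw [← hp, h, hf0])
    have := Matrix.ext_iff.mpr h2 i0 i0
    simp at this
  have hx : ∃ x, p *ᵥ x ≠ 0 := by
    by_contra h
    push_neg at h
    apply hpne
    ext a b
    have := congrFun (h (Pi.single b 1)) a
    simpa using this
  obtain ⟨x, hxne⟩ := hx
  set y := p *ᵥ x with hy
  have hpy : p *ᵥ y = y := by rw [hy, mulVec_mulVec, hpp]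
  set r : ℝ := ∑ i, Complex.normSq (y i) with hr
  have hyr : star y ⬝ᵥ y = (r : ℂ) := by
    simp [dotProduct, hr, Complex.normSq_eq_conj_mul_self]
  have hrpos : 0 < r := by
    rcases lt_or_eq_of_le (Finset.sum_nonneg (fun i _ => Complex.normSq_nonneg (y i)) : 0 ≤ r) with h | h
    · exact h
    · exfalso; apply hxne
      funext i
      exact Complex.normSq_eq_zero.mp ((Finset.sum_eq_zero_iff_of_nonneg
          (fun i _ => Complex.normSq_nonneg (y i))).mp h.symm i (Finset.mem_univ i))
  set d : ℝ := (Real.sqrt r)⁻¹ with hd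
  set ξ : Fin n → ℂ := (d : ℂ) • y with hξ
  have hpξ : p *ᵥ ξ = ξ := by rw [hξ, mulVec_smul, hpy]
  have hξξ : star ξ ⬝ᵥ ξ = 1 := by
    rw [hξ, star_smul, smul_dotProduct, dotProduct_smul, hyr]
    simp only [smul_eq_mul, RCLike.star_def, Complex.conj_ofReal]
    rw [← Complex.ofReal_mul, ← Complex.ofReal_mul]
    norm_cast
    rw [hd, ← Real.sqrt_inv, ← mul_assoc, Real.mul_self_sqrt (le_of_lt (inv_pos.mpr hrpos))]
    exact inv_mul_cancel₀ (ne_of_gt hrpos)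
  set u : Matrix (Fin n) (Fin n) ℂ := Matrix.of (fun a k => (f (single k i0 1) *ᵥ ξ) a) with hu
  have huu : star u * u = 1 := by
    ext k l
    have h1 : (star u * u) k l = star (fun a => u a k) ⬝ᵥ (fun a => u a l) := by
      simp [Matrix.mul_apply, Matrix.star_apply, dotProduct, Pi.star_apply]
    rw [h1]
    have h2 : (fun a => u a k) = f (single k i0 1) *ᵥ ξ := rfl
    have h3 : (fun a => u a l) = f (single l i0 1) *ᵥ ξ := rfl
    rw [h2, h3, star_mulVec, dotProduct_mulVec, vecMul_vecMul]
    have h4 : (f (single k i0 1))ᴴ * f (single l i0 1) = if k = l then p else 0 := by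
      have h5 : (f (single k i0 1))ᴴ = f (single i0 k 1) := by
        rw [show (f (single k i0 1))ᴴ = star (f (single k i0 1)) from rfl,
          ← hstar, hEstar]
      rw [h5, ← hmul, hEmul]
      split_ifs with h
      · subst h; rfl
      · rw [hf0]
    rw [h4]
    split_ifs with h
    · subst h
      rw [← dotProduct_mulVec, hpξ, hξξ, Matrix.one_apply_eq]
    · simp [Matrix.one_apply, h]
  have huu' : u * star u = 1 := mul_eq_one_comm.mp huu
  refine ⟨u, huu, huu', ?_⟩
  have hbasis : ∀ k l : Fin n, f (single k l 1) * u = u * single k l 1 := by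
    intro k l
    ext a b
    have lhs : (f (single k l 1) * u) a b
        = ((f (single k l 1) * f (single b i0 1)) *ᵥ ξ) a := by
      simp only [hu, Matrix.mul_apply, Matrix.of_apply, mulVec, dotProduct, Finset.mul_sum]
      rw [Finset.sum_comm]
      refine Finset.sum_congr rfl fun i _ => ?_
      rw [Finset.sum_mul]
      refine Finset.sum_congr rfl fun c _ => ?_
      ring
    rw [lhs, ← hmul, hEmul]
    by_cases h : l = b
    · subst h
      rw [if_pos rfl]
      have h6 : (u * single k l (1:ℂ)) a l = u a k * 1 :=
        mul_single_apply_same (1:ℂ) k l a u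
      rw [h6, mul_one]
      rfl
    · rw [if_neg h, hf0, Matrix.zero_mulVec,
        mul_single_apply_of_ne (1:ℂ) k l a b (fun hh => h hh.symm) u]
      rfl
  have hkey : ∀ a, f a * u = u * a := by
    intro a
    have F : Matrix (Fin n) (Fin n) ℂ →+ Matrix (Fin n) (Fin n) ℂ := AddMonoidHom.mk' f hadd
    have hfs : f (∑ k, ∑ l, single k l (a k l)) = ∑ k, ∑ l, f (single k l (a k l)) := by
      rw [show f = ⇑(AddMonoidHom.mk' f hadd) from rfl, map_sum]
      exact Finset.sum_congr rfl fun k _ => map_sum _ _ _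
    calc f a * u = f (∑ k, ∑ l, single k l (a k l)) * u := by
          rw [← matrix_eq_sum_single a]
      _ = (∑ k, ∑ l, f (single k l (a k l))) * u := by rw [hfs]
      _ = ∑ k, ∑ l, f (single k l (a k l)) * u := by
          rw [Finset.sum_mul]; exact Finset.sum_congr rfl fun k _ => Finset.sum_mul _ _ _
      _ = ∑ k, ∑ l, u * single k l (a k l) := by
          refine Finset.sum_congr rfl fun k _ => Finset.sum_congr rfl fun l _ => ?_
          have h1 : single k l (a k l) = (a k l) • single k l (1:ℂ) := by simp
          rw [h1, hsmul, smul_mul_assoc, hbasis, mul_smul_comm]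
      _ = u * ∑ k, ∑ l, single k l (a k l) := by
          rw [Finset.mul_sum]; exact Finset.sum_congr rfl fun k _ => (Finset.mul_sum _ _ _).symm
      _ = u * a := by rw [← matrix_eq_sum_single a]
  intro a
  calc f a = f a * (u * star u) := by rw [huu', mul_one]
    _ = (f a * u) * star u := by rw [mul_assoc]
    _ = u * a * star u := by rw [hkey a]

section Classification

variable {N : ℕ} {B1 B : StarSubalgebra ℂ (MatN N)} {I : ℕ} {n J : Fin I → ℕ}
variable {u : MatN N}

lemma phi_zero (e : ↥B ≃⋆ₐ[ℂ] CAlg I n J) (hu : u ∈ Stab B1 B) :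
    Phi e u (0 : CAlg I n J) = 0 := by
  apply phi_eq e hu
  simp

lemma smul_one_inj {m : ℕ} (hm : 0 < m) {a b : ℂ}
    (h : a • (1 : Matrix (Fin m) (Fin m) ℂ) = b • 1) : a = b := by
  have := Matrix.ext_iff.mpr h ⟨0, hm⟩ ⟨0, hm⟩
  simpa using this

lemma cE_apply_same (i : Fin I) (j : Fin (J i)) : cE n i j i j = 1 := by
  simp [cE, sE]

lemma cE_apply_ne {i i' : Fin I} {j : Fin (J i)} {j' : Fin (J i')}
    (h : (⟨i', j'⟩ : (k : Fin I) × Fin (J k)) ≠ ⟨i, j⟩) : cE n i j i' j' = 0 := by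
  rcases eq_or_ne i' i with rfl | hi
  · have hj : j' ≠ j := by
      intro hh; exact h (by rw [hh])
    simp [cE, sE, Pi.single_eq_of_ne hj]
  · simp [cE, sE, Pi.single_eq_of_ne hi]

lemma cE_idem (i : Fin I) (j : Fin (J i)) : cE n i j * cE n i j = cE n i j := by
  rw [cE, sE_mul, one_mul]

lemma phi_corner (e : ↥B ≃⋆ₐ[ℂ] CAlg I n J) (hu : u ∈ Stab B1 B)
    {k k' : (i : Fin I) × Fin (J i)}
    (hzk : Phi e u (cE n k.1 k.2) = cE n k'.1 k'.2) (m : Matrix (Fin (n k.1)) (Fin (n k.1)) ℂ) :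
    Phi e u (sE k.1 k.2 m) = sE k'.1 k'.2 ((Phi e u (sE k.1 k.2 m)) k'.1 k'.2) := by
  have h1 := corner_eq k.1 k.2 (sE (n := n) k.1 k.2 m)
  rw [sE_apply_same] at h1
  conv_lhs => rw [← h1]
  rw [phi_mul e hu, phi_mul e hu, hzk]
  exact corner_eq k'.1 k'.2 _

lemma corner_finrank_le (e : ↥B ≃⋆ₐ[ℂ] CAlg I n J) (hu : u ∈ Stab B1 B)
    {k k' : (i : Fin I) × Fin (J i)}
    (hzk : Phi e u (cE n k.1 k.2) = cE n k'.1 k'.2) :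
    n k.1 * n k.1 ≤ n k'.1 * n k'.1 := by
  classical
  set F : Matrix (Fin (n k.1)) (Fin (n k.1)) ℂ →ₗ[ℂ] Matrix (Fin (n k'.1)) (Fin (n k'.1)) ℂ :=
    { toFun := fun m => Phi e u (sE k.1 k.2 m) k'.1 k'.2
      map_add' := by
        intro a b
        show Phi e u (sE k.1 k.2 (a + b)) k'.1 k'.2 = _
        rw [← sE_add, phi_add e hu]
        rfl
      map_smul' := by
        intro c a
        show Phi e u (sE k.1 k.2 (c • a)) k'.1 k'.2
          = (RingHom.id ℂ) c • Phi e u (sE k.1 k.2 a) k'.1 k'.2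
        rw [← sE_smul, phi_smul e hu]
        rfl } with hF
  have hFinj : Function.Injective F := by
    rw [injective_iff_map_eq_zero]
    intro m hm
    have hsupp := phi_corner e hu hzk m
    have hm' : Phi e u (sE k.1 k.2 m) k'.1 k'.2 = 0 := hm
    rw [hm', sE_zero] at hsupp
    have h0 : sE (n := n) k.1 k.2 m = 0 := by
      apply phi_inj e hu
      rw [hsupp, phi_zero e hu]
    have := congrFun (congrFun h0 k.1) k.2
    rwa [sE_apply_same] at this
  have := LinearMap.finrank_le_finrank_of_injective hFinj
  have h1 : ∀ a : ℕ, Module.finrank ℂ (Matrix (Fin a) (Fin a) ℂ) = a * a := by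
    intro a
    rw [Module.finrank_matrix]
    simp
  rwa [h1, h1] at this

lemma phi_perm (e : ↥B ≃⋆ₐ[ℂ] CAlg I n J) (hu : u ∈ Stab B1 B)
    (hn : ∀ i, 0 < n i) (hmono : StrictMono n) :
    ∃ σ : ∀ i, Equiv.Perm (Fin (J i)), ∀ i j, Phi e u (cE n i j) = cE n i (σ i j) := by
  classical
  set z : ((i : Fin I) × Fin (J i)) → CAlg I n J := fun k => Phi e u (cE n k.1 k.2) with hz
  have hscal : ∀ k s : ((i : Fin I) × Fin (J i)), ∃ α : ℂ,
      (α = 0 ∨ α = 1) ∧ z k s.1 s.2 = α • 1 := by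
    intro k s
    have hcent : ∀ m : Matrix (Fin (n s.1)) (Fin (n s.1)) ℂ,
        z k s.1 s.2 * m = m * z k s.1 s.2 := by
      intro m
      have h := phi_comm e hu (cE_comm k.1 k.2) (sE s.1 s.2 m)
      have h2 := congrFun (congrFun h s.1) s.2
      simp only [Pi.mul_apply] at h2
      rwa [sE_apply_same] at h2
    obtain ⟨α, hα⟩ := Matrix.mem_range_scalar_of_commute_single
      (M := z k s.1 s.2) (fun i j _ => ((hcent _).symm : Commute _ _))
    have hsm : z k s.1 s.2 = α • 1 := by
      rw [← hα, Matrix.scalar_apply]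
      ext a b
      rcases eq_or_ne a b with rfl | hab
      · simp [Matrix.one_apply]
      · simp [Matrix.one_apply, Matrix.diagonal_apply_ne _ hab, hab]
    have hidem : z k * z k = z k := by
      rw [hz]
      show Phi e u _ * Phi e u _ = Phi e u _
      rw [← phi_mul e hu, cE_idem]
    have hcomp : z k s.1 s.2 * z k s.1 s.2 = z k s.1 s.2 := by
      have := congrFun (congrFun hidem s.1) s.2
      simpa only [Pi.mul_apply] using this
    rw [hsm, smul_mul_smul_comm, one_mul] at hcomp
    have hαα : α * α = α := smul_one_inj (hn s.1) hcomp
    refine ⟨α, ?_, hsm⟩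
    rcases mul_eq_zero.mp (show α * (α - 1) = 0 by rw [mul_sub, mul_one, hαα, sub_self]) with h | h
    · exact Or.inl h
    · exact Or.inr (sub_eq_zero.mp h)
  choose α hα01 hαval using hscal
  have hsigma : ∀ g : ((i : Fin I) × Fin (J i)) → CAlg I n J,
      ∑ k : (i : Fin I) × Fin (J i), g k = ∑ i, ∑ j, g ⟨i, j⟩ := by
    intro g
    rw [← Finset.univ_sigma_univ, Finset.sum_sigma]
  have hsum1 : ∀ s : (i : Fin I) × Fin (J i), ∑ k : (i : Fin I) × Fin (J i), α k s = 1 := by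
    intro s
    have h1 : ∑ k : (i : Fin I) × Fin (J i), z k = 1 := by
      rw [hz, hsigma (fun k => Phi e u (cE n k.1 k.2))]
      have : ∀ i : Fin I, ∑ j, Phi e u (cE n i j) = Phi e u (∑ j, cE n i j) :=
        fun i => (phi_sum e hu _ _).symm
      rw [Finset.sum_congr rfl (fun i _ => this i), ← phi_sum e hu, cE_sum, phi_one e hu]
    have h2 := congrFun (congrFun h1 s.1) s.2
    rw [Finset.sum_apply, Finset.sum_apply] at h2
    have h3 : ∀ k : (i : Fin I) × Fin (J i), z k s.1 s.2 = α k s • 1 := fun k => hαval k s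
    rw [Finset.sum_congr rfl (fun k _ => h3 k), ← Finset.sum_smul] at h2
    have h4 : (1 : CAlg I n J) s.1 s.2 = (1 : Matrix (Fin (n s.1)) (Fin (n s.1)) ℂ) := rfl
    rw [h4] at h2
    have h5 : (∑ k : (i : Fin I) × Fin (J i), α k s) • (1 : Matrix (Fin (n s.1)) (Fin (n s.1)) ℂ)
        = (1 : ℂ) • 1 := by rw [h2, one_smul]
    exact smul_one_inj (hn s.1) h5
  have horth : ∀ k k' : (i : Fin I) × Fin (J i), k ≠ k' → ∀ s, α k s * α k' s = 0 := by
    intro k k' hkk s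
    have h1 : z k * z k' = 0 := by
      rw [hz]
      show Phi e u _ * Phi e u _ = 0
      rw [← phi_mul e hu, cE_orth (by
        intro hc
        exact hkk (by
          have : k = k' := by
            rcases k with ⟨k1, k2⟩; rcases k' with ⟨k1', k2'⟩
            exact hc
          exact this)), phi_zero e hu]
    have h2 := congrFun (congrFun h1 s.1) s.2
    rw [Pi.mul_apply, Pi.mul_apply] at h2
    rw [hαval k s, hαval k' s, smul_mul_smul_comm, one_mul] at h2
    have h3 : (α k s * α k' s) • (1 : Matrix (Fin (n s.1)) (Fin (n s.1)) ℂ) = (0 : ℂ) • 1 := by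
      rw [h2, zero_smul]
      rfl
    exact smul_one_inj (hn s.1) h3
  have hexists : ∀ s : (i : Fin I) × Fin (J i), ∃ k, α k s = 1 := by
    intro s
    by_contra h
    push_neg at h
    have h0 : ∀ k, α k s = 0 := fun k => (hα01 k s).resolve_right (h k)
    have := hsum1 s
    rw [Finset.sum_congr rfl (fun k _ => h0 k), Finset.sum_const_zero] at this
    exact zero_ne_one this
  choose τ hτ using hexists
  have huniq : ∀ s k, α k s = 1 → k = τ s := by
    intro s k hk
    by_contra hne
    have := horth k (τ s) hne s
    rw [hk, hτ s, one_mul] at this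
    exact one_ne_zero this
  have hsurj : Function.Surjective τ := by
    intro k
    have hzne : z k ≠ 0 := by
      intro h0
      have h1 : cE n k.1 k.2 = 0 := by
        apply phi_inj e hu
        rw [phi_zero e hu]
        exact h0
      have h2 := congrFun (congrFun h1 k.1) k.2
      rw [cE_apply_same] at h2
      have h3 := Matrix.ext_iff.mpr h2 ⟨0, hn k.1⟩ ⟨0, hn k.1⟩
      simpa using h3
    have hex : ∃ s : (i : Fin I) × Fin (J i), α k s ≠ 0 := by
      by_contra h
      push_neg at h
      apply hzne
      funext i' j'
      rw [hαval k ⟨i', j'⟩, h ⟨i', j'⟩, zero_smul]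
      rfl
    obtain ⟨s, hs⟩ := hex
    exact ⟨s, (huniq s k ((hα01 k s).resolve_left hs)).symm⟩
  have hbij : Function.Bijective τ := Finite.surjective_iff_bijective.mp hsurj
  set tEq := Equiv.ofBijective τ hbij with htEq
  set ρ := tEq.symm with hρ
  have hτρ : ∀ k, τ (ρ k) = k := fun k => tEq.apply_symm_apply k
  have hsρ : ∀ s k, τ s = k → s = ρ k := by
    intro s k h
    have : tEq s = k := h
    rw [← this, hρ, Equiv.symm_apply_apply]
  have hzc : ∀ k, z k = cE n (ρ k).1 (ρ k).2 := by
    intro k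
    funext i' j'
    rw [hαval k ⟨i', j'⟩]
    by_cases hs : (⟨i', j'⟩ : (i : Fin I) × Fin (J i)) = ρ k
    · have hone : α k ⟨i', j'⟩ = 1 := by
        rw [hs]
        have h' := hτ (ρ k)
        rwa [hτρ k] at h'
      rw [hone, one_smul]
      rw [← hs]
      exact (cE_apply_same i' j').symm
    · have hzero : α k ⟨i', j'⟩ = 0 := by
        rcases hα01 k ⟨i', j'⟩ with h | h
        · exact h
        · exfalso
          have := huniq ⟨i', j'⟩ k h
          exact hs (hsρ _ _ this.symm)
      rw [hzero, zero_smul]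
      exact (cE_apply_ne (fun hc => hs hc)).symm
  have hfst : ∀ k, (ρ k).1 = k.1 := by
    intro k
    have h1 : Phi e u (cE n k.1 k.2) = cE n (ρ k).1 (ρ k).2 := hzc k
    have h2 : Phi e (star u) (cE n (ρ k).1 (ρ k).2) = cE n k.1 k.2 := by
      rw [← h1, phi_inv e hu]
    have le1 := corner_finrank_le e hu (k := k) (k' := ρ k) h1
    have le2 := corner_finrank_le e (stab_star hu) (k := ρ k) (k' := k) h2
    have heq : n (ρ k).1 * n (ρ k).1 = n k.1 * n k.1 := le_antisymm le2 le1
    exact hmono.injective ((mul_self_inj (Nat.zero_le _) (Nat.zero_le _)).mp heq)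
  have hcast : ∀ (k : (i : Fin I) × Fin (J i)) (i : Fin I) (h : k.1 = i),
      k = ⟨i, Fin.cast (congrArg J h) k.2⟩ := by
    intro k i h
    subst h
    rfl
  set σf : ∀ i, Fin (J i) → Fin (J i) :=
    fun i j => Fin.cast (congrArg J (hfst ⟨i, j⟩)) (ρ ⟨i, j⟩).2 with hσf
  have hρeq : ∀ (i : Fin I) (j : Fin (J i)), ρ ⟨i, j⟩ = ⟨i, σf i j⟩ :=
    fun i j => hcast (ρ ⟨i, j⟩) i (hfst ⟨i, j⟩)
  have hinjf : ∀ i, Function.Injective (σf i) := by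
    intro i j j' h
    have h1 : ρ ⟨i, j⟩ = ρ ⟨i, j'⟩ := by rw [hρeq, hρeq, h]
    have h2 := ρ.injective h1
    simpa using h2
  refine ⟨fun i => Equiv.ofBijective (σf i) (Finite.injective_iff_bijective.mp (hinjf i)), ?_⟩
  intro i j
  have h1 := hzc ⟨i, j⟩
  rw [hρeq i j] at h1
  exact h1

end Classification

section Kernel

variable {N : ℕ} {B1 B : StarSubalgebra ℂ (MatN N)} {I : ℕ} {n J : Fin I → ℕ}
variable {u : MatN N}

lemma phi_ker (e : ↥B ≃⋆ₐ[ℂ] CAlg I n J) (hu : u ∈ Stab B1 B) (hB : B ≤ B1)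
    (hn : ∀ i, 0 < n i) (hfix : ∀ i j, Phi e u (cE n i j) = cE n i j) :
    u ∈ Gsub B1 B := by
  classical
  have hsupp : ∀ (i : Fin I) (j : Fin (J i)) (m : Matrix (Fin (n i)) (Fin (n i)) ℂ),
      Phi e u (sE i j m) = sE i j (Phi e u (sE i j m) i j) :=
    fun i j m => phi_corner e hu (k := ⟨i, j⟩) (k' := ⟨i, j⟩) (hfix i j) m
  set f : ∀ (i : Fin I) (j : Fin (J i)),
      Matrix (Fin (n i)) (Fin (n i)) ℂ → Matrix (Fin (n i)) (Fin (n i)) ℂ :=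
    fun i j m => Phi e u (sE i j m) i j with hf
  have hfadd : ∀ i j a b, f i j (a + b) = f i j a + f i j b := by
    intro i j a b
    show Phi e u (sE i j (a + b)) i j = _
    rw [← sE_add, phi_add e hu]
    rfl
  have hfsmul : ∀ i j (c : ℂ) a, f i j (c • a) = c • f i j a := by
    intro i j c a
    show Phi e u (sE i j (c • a)) i j = _
    rw [← sE_smul, phi_smul e hu]
    rfl
  have hfmul : ∀ i j a b, f i j (a * b) = f i j a * f i j b := by
    intro i j a b
    show Phi e u (sE i j (a * b)) i j = _
    rw [← sE_mul, phi_mul e hu]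
    rfl
  have hfstar : ∀ i j a, f i j (star a) = star (f i j a) := by
    intro i j a
    show Phi e u (sE i j (star a)) i j = _
    rw [← sE_star, phi_star e hu]
    rfl
  have hfinj : ∀ i j, Function.Injective (f i j) := by
    intro i j a b h
    have h1 := hsupp i j a
    have h2 := hsupp i j b
    have h3 : Phi e u (sE i j a) = Phi e u (sE i j b) := by
      rw [h1, h2]
      show sE i j (f i j a) = sE i j (f i j b)
      rw [h]
    have h4 := phi_inj e hu h3
    have h5 := congrFun (congrFun h4 i) j
    rwa [sE_apply_same, sE_apply_same] at h5
  have hSN : ∀ i j, ∃ v : Matrix (Fin (n i)) (Fin (n i)) ℂ, star v * v = 1 ∧ v * star v = 1 ∧ ∀ a, f i j a = v * a * star v :=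
    fun i j => sn_aux (hn i) (f i j) (hfadd i j) (hfsmul i j) (hfmul i j) (hfstar i j)
      (hfinj i j)
  choose v hv1 hv2 hv3 using hSN
  set V : CAlg I n J := fun i j => v i j with hV
  have hVu1 : star V * V = 1 := by
    funext i j
    exact hv1 i j
  have hVu2 : V * star V = 1 := by
    funext i j
    exact hv2 i j
  have hphiV : ∀ x, Phi e u x = V * x * star V := by
    intro x
    set W : CAlg I n J := fun i j => f i j (x i j) with hW
    have h1 : Phi e u x = ∑ i, ∑ j, sE i j (f i j (x i j)) := by
      conv_lhs => rw [pi_decomp x]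
      rw [phi_sum e hu]
      refine Finset.sum_congr rfl fun i _ => ?_
      rw [phi_sum e hu]
      refine Finset.sum_congr rfl fun j _ => ?_
      exact hsupp i j (x i j)
    have h2 : ∑ i, ∑ j, sE (n := n) i j (f i j (x i j)) = W := (pi_decomp W).symm
    rw [h1, h2]
    funext i j
    exact hv3 i j (x i j)
  set Vm := ((e.symm V : ↥B) : MatN N) with hVm
  have hVmB : Vm ∈ B := (e.symm V).2
  have hVms : star Vm * Vm = 1 := by
    have h1 : star Vm * Vm = ((e.symm (star V * V) : ↥B) : MatN N) := by
      rw [mB_mul, mB_star]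
    rw [h1, hVu1, mB_one]
  have hVss : Vm * star Vm = 1 := by
    have h1 : Vm * star Vm = ((e.symm (V * star V) : ↥B) : MatN N) := by
      rw [mB_mul, mB_star]
    rw [h1, hVu2, mB_one]
  have hVmU : Vm ∈ unitary (MatN N) := Unitary.mem_iff.mpr ⟨hVms, hVss⟩
  have hconj : ∀ b ∈ B, u * b * star u = Vm * b * star Vm := by
    intro b hb
    set x := e ⟨b, hb⟩ with hx
    have h1 := phi_spec e hu x
    have h2 : ((e.symm x : ↥B) : MatN N) = b := by rw [hx, StarAlgEquiv.symm_apply_apply]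
    rw [h2] at h1
    rw [hphiV x] at h1
    rw [mB_mul, mB_mul, mB_star, h2] at h1
    exact h1.symm
  refine ⟨Vm, star Vm * u, hVmU, hVmB, ?_, ?_, ?_, ?_⟩
  · exact mul_mem (Unitary.star_mem hVmU) hu.1
  · exact mul_mem (star_mem (hB hVmB)) hu.2.1
  · intro b hb
    have h := hconj b hb
    have h1 : u * b = Vm * b * star Vm * u := by
      calc u * b = u * b * (star u * u) := by rw [stab_su hu, mul_one]
        _ = (u * b * star u) * u := by simp only [← mul_assoc]
        _ = (Vm * b * star Vm) * u := by rw [h]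
    calc star Vm * u * b = star Vm * (u * b) := by rw [mul_assoc]
      _ = star Vm * (Vm * b * star Vm * u) := by rw [h1]
      _ = (star Vm * Vm) * b * star Vm * u := by simp only [← mul_assoc]
      _ = b * (star Vm * u) := by rw [hVms, one_mul, mul_assoc]
  · rw [← mul_assoc, hVss, one_mul]

end Kernel

section Final

variable {N : ℕ} {B1 B : StarSubalgebra ℂ (MatN N)}

lemma sandwich (v w c : MatN N) (hwc : w * c = c * w) (hwss : w * star w = 1) :
    v * w * c * (star w * star v) = v * c * star v := by
  have h : v * w * c * (star w * star v) = v * (w * c * star w) * star v := by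
    simp only [mul_assoc]
  rw [h, hwc, mul_assoc c w (star w), hwss, mul_one]

lemma gsub_subset_stab (hB : B ≤ B1) : Gsub B1 B ⊆ Stab B1 B := by
  rintro g ⟨v, w, hvU, hvB, hwU, hwB1, hcomm, rfl⟩
  have hvs : star v * v = 1 := (Unitary.mem_iff.mp hvU).1
  have hvss : v * star v = 1 := (Unitary.mem_iff.mp hvU).2
  have hwss : w * star w = 1 := (Unitary.mem_iff.mp hwU).2
  refine ⟨mul_mem hvU hwU, mul_mem (hB hvB) hwB1, ?_⟩
  ext b
  constructor
  · rintro ⟨c, hc, rfl⟩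
    show v * w * c * star (v * w) ∈ (B : Set (MatN N))
    rw [star_mul, sandwich v w c (hcomm c hc) hwss]
    exact mul_mem (mul_mem hvB hc) (star_mem hvB)
  · intro hb
    have hc : star v * b * v ∈ B := mul_mem (mul_mem (star_mem hvB) hb) hvB
    refine ⟨star v * b * v, hc, ?_⟩
    show v * w * (star v * b * v) * star (v * w) = b
    rw [star_mul, sandwich v w _ (hcomm _ hc) hwss]
    have h : v * (star v * b * v) * star v = v * star v * b * (v * star v) := by
      simp only [mul_assoc]
    rw [h, hvss, one_mul, mul_one]

lemma gsub_normal {u g : MatN N} (hu : u ∈ Stab B1 B) (hg : g ∈ Gsub B1 B) :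
    u * g * star u ∈ Gsub B1 B := by
  obtain ⟨v, w, hvU, hvB, hwU, hwB1, hcomm, rfl⟩ := hg
  refine ⟨u * v * star u, u * w * star u,
    mul_mem (mul_mem hu.1 hvU) (Unitary.star_mem hu.1),
    stab_conj_mem hu hvB,
    mul_mem (mul_mem hu.1 hwU) (Unitary.star_mem hu.1),
    mul_mem (mul_mem hu.2.1 hwB1) (star_mem hu.2.1), ?_, ?_⟩
  · intro b hb
    have hb' : star u * b * u ∈ B := stab_conj_mem' hu hb
    have h1 := hcomm _ hb'
    have e1 : u * (w * (star u * b * u)) * star u = u * w * star u * b := by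
      simp only [mul_assoc]
      rw [stab_us hu, mul_one]
    calc u * w * star u * b = u * (w * (star u * b * u)) * star u := e1.symm
      _ = u * ((star u * b * u) * w) * star u := by rw [h1]
      _ = b * (u * w * star u) := by
          simp only [mul_assoc]
          rw [← mul_assoc u (star u) (b * (u * (w * star u))), stab_us hu, one_mul]
  · show u * (v * w) * star u = u * v * star u * (u * w * star u)
    simp only [mul_assoc]
    rw [← mul_assoc (star u) u (w * star u), stab_su hu, one_mul]

end Final

/-- `G` is a normal subgroup of `Stab(B1,B)` of finite index; if
`B ≅ ⊕_{i=1}^I ⊕_{j=1}^{J_i} M_{n_i}` with `n_1 < ⋯ < n_I`, the index is at most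
`J_1! ⋯ J_I!`. -/
theorem stab_normal_finite_index (N : ℕ) (hN : 0 < N)
    (B1 B : StarSubalgebra ℂ (MatN N)) (hB : B ≤ B1)
    (I : ℕ) (hI : 0 < I) (n J : Fin I → ℕ) (hn : ∀ i, 0 < n i) (hJ : ∀ i, 0 < J i)
    (hmono : StrictMono n)
    (iso : Nonempty (↥B ≃⋆ₐ[ℂ]
      ((i : Fin I) → Fin (J i) → Matrix (Fin (n i)) (Fin (n i)) ℂ))) :
    Gsub B1 B ⊆ Stab B1 B ∧
    (∀ u ∈ Stab B1 B, ∀ g ∈ Gsub B1 B, u * g * star u ∈ Gsub B1 B) ∧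
    ∃ T : Finset (MatN N), (T : Set (MatN N)) ⊆ Stab B1 B ∧
      T.card ≤ ∏ i, Nat.factorial (J i) ∧
      ∀ u ∈ Stab B1 B, ∃ t ∈ T, ∃ g ∈ Gsub B1 B, u = t * g := by
  classical
  obtain ⟨e⟩ := iso
  refine ⟨gsub_subset_stab hB, fun u hu g hg => gsub_normal hu hg, ?_⟩
  set rep : (∀ i, Equiv.Perm (Fin (J i))) → MatN N := fun π =>
    if h : ∃ u ∈ Stab B1 B, ∀ i j, Phi e u (cE n i j) = cE n i (π i j) then h.choose else 1
    with hrep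
  have hrep_stab : ∀ π, rep π ∈ Stab B1 B := by
    intro π
    simp only [hrep]
    split_ifs with h
    · exact h.choose_spec.1
    · exact stab_one
  have hrep_fix : ∀ π, (∃ u ∈ Stab B1 B, ∀ i j, Phi e u (cE n i j) = cE n i (π i j)) →
      ∀ i j, Phi e (rep π) (cE n i j) = cE n i (π i j) := by
    intro π h
    simp only [hrep, dif_pos h]
    exact h.choose_spec.2
  refine ⟨Finset.image rep Finset.univ, ?_, ?_, ?_⟩
  · intro t ht
    obtain ⟨π, _, rfl⟩ := Finset.mem_image.mp ht
    exact hrep_stab π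
  · calc (Finset.image rep Finset.univ).card ≤ Finset.univ.card := Finset.card_image_le
      _ = Fintype.card (∀ i, Equiv.Perm (Fin (J i))) := Finset.card_univ
      _ = ∏ i, Nat.factorial (J i) := by
          rw [Fintype.card_pi]
          exact Finset.prod_congr rfl fun i _ => by rw [Fintype.card_perm, Fintype.card_fin]
  · intro u hu
    obtain ⟨σ, hσ⟩ := phi_perm e hu hn hmono
    have hex : ∃ u' ∈ Stab B1 B, ∀ i j, Phi e u' (cE n i j) = cE n i (σ i j) := ⟨u, hu, hσ⟩
    have htfix := hrep_fix σ hex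
    have htS := hrep_stab σ
    have hgStab : star (rep σ) * u ∈ Stab B1 B := stab_mul (stab_star htS) hu
    have hgfix : ∀ i j, Phi e (star (rep σ) * u) (cE n i j) = cE n i j := by
      intro i j
      rw [phi_comp e (stab_star htS) hu, hσ i j, ← htfix i j]
      exact phi_inv e htS _
    refine ⟨rep σ, Finset.mem_image_of_mem rep (Finset.mem_univ σ),
      star (rep σ) * u, phi_ker e hgStab hB hn hgfix, ?_⟩
    rw [← mul_assoc, stab_us htS, one_mul]
end
end
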